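/- For any information-lossless finite-state encoder with s states, input alphabet of size α, fixed initial state z, and block length ℓ, the generalized Kraft sum K(z) = Σ_{w∈X^ℓ} 2^{-L[f(z,w)]} over all input blocks w of length ℓ satisfies K(z) ≤ s·(1 + log₂(1 + α^ℓ/s)). -/
import Mathlib


/-- **Generalized Kraft inequality for information-lossless finite-state encoders.**
For an IL finite-state encoder with state set `Z` (of size `s`), input alphabet `X`
(of size `α`), block length `ℓ`, output function `f` (giving the output bit string
produced on an input block from a given starting state) and final-state map `g`,
information losslessness (for fixed initial state, the pair (output bits, final state)
determines the input block) implies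
`K(z) = ∑_{w ∈ X^ℓ} 2^{-L[f(z,w)]} ≤ s·(1 + log₂(1 + α^ℓ/s))`. -/
theorem stmt_0 {X Z : Type} [Fintype X] [Fintype Z] [Nonempty Z] {ℓ : ℕ}
    (f : Z → (Fin ℓ → X) → List Bool) (g : Z → (Fin ℓ → X) → Z)
    (hIL : ∀ z : Z, Function.Injective (fun w : Fin ℓ → X => (f z w, g z w)))
    (z : Z) :
    ∑ w : Fin ℓ → X, (2 : ℝ) ^ (-((f z w).length : ℝ)) ≤
      (Fintype.card Z : ℝ) *
        (1 + Real.logb 2 (1 + (Fintype.card X : ℝ) ^ ℓ / (Fintype.card Z : ℝ))) := by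
  classical
  set s : ℝ := (Fintype.card Z : ℝ) with hs
  set N : ℝ := (Fintype.card X : ℝ) ^ ℓ with hN
  have hspos : 0 < s := by
    rw [hs]
    exact_mod_cast Fintype.card_pos (α := Z)
  have hNnn : 0 ≤ N := by positivity
  set t : ℝ := Real.logb 2 (1 + N / s) with ht
  have htnn : 0 ≤ t := Real.logb_nonneg one_lt_two (by
    have : 0 ≤ N / s := div_nonneg hNnn hspos.le
    linarith)
  set c : ℕ := ⌈t⌉₊ with hc
  have hcle : (c : ℝ) ≤ t + 1 := (Nat.ceil_lt_add_one htnn).le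
  have hP : 1 + N / s ≤ (2:ℝ) ^ c := by
    have h1 : 1 + N / s = (2:ℝ) ^ t := by
      rw [ht]
      rw [Real.rpow_logb two_pos (by norm_num) (by positivity)]
    have h2 : (2:ℝ) ^ t ≤ (2:ℝ) ^ (c:ℝ) :=
      Real.rpow_le_rpow_of_exponent_le one_le_two (Nat.le_ceil t)
    rw [Real.rpow_natCast] at h2
    linarith
  set E : ℝ := (2:ℝ) ^ (-(c:ℝ)) with hE
  have hEpos : 0 < E := Real.rpow_pos_of_pos two_pos _
  have hEP : E * (2:ℝ) ^ c = 1 := by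
    rw [hE, ← Real.rpow_natCast 2 c, ← Real.rpow_add two_pos]
    simp
  -- counting lemma: at most s * 2^j blocks have output length j
  have hcount : ∀ j : ℕ,
      (((Finset.univ : Finset (Fin ℓ → X)).filter
          (fun w => (f z w).length = j)).card : ℝ) ≤ s * 2 ^ j := by
    intro j
    have h1 : ((Finset.univ : Finset (Fin ℓ → X)).filter
            (fun w => (f z w).length = j)).card
        = (((Finset.univ : Finset (Fin ℓ → X)).filter
            (fun w => (f z w).length = j)).image
            (fun w => (f z w, g z w))).card :=
      (Finset.card_image_of_injective _ (hIL z)).symm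
    have h2 : ((Finset.univ : Finset (Fin ℓ → X)).filter
            (fun w => (f z w).length = j)).image (fun w => (f z w, g z w))
        ⊆ ((Finset.univ : Finset (List.Vector Bool j)).image
            (fun v => v.val)) ×ˢ Finset.univ := by
      intro p hp
      simp only [Finset.mem_image, Finset.mem_filter, Finset.mem_univ, true_and] at hp
      obtain ⟨w, hw, rfl⟩ := hp
      exact Finset.mem_product.2
        ⟨Finset.mem_image.2 ⟨⟨f z w, hw⟩, Finset.mem_univ _, rfl⟩, Finset.mem_univ _⟩
    have h3 := Finset.card_le_card h2
    rw [h1]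
    rw [Finset.card_product] at h3
    have h4 := le_trans h3 (Nat.mul_le_mul_right _ Finset.card_image_le)
    rw [Finset.card_univ, Finset.card_univ, card_vector, Fintype.card_bool] at h4
    calc ((((Finset.univ : Finset (Fin ℓ → X)).filter
            (fun w => (f z w).length = j)).image
            (fun w => (f z w, g z w))).card : ℝ)
        ≤ ((2 ^ j * Fintype.card Z : ℕ) : ℝ) := by exact_mod_cast h4
      _ = s * 2 ^ j := by push_cast [hs]; ring
  -- pointwise bound
  have hpt : ∀ w : Fin ℓ → X, (2 : ℝ) ^ (-((f z w).length : ℝ)) ≤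
      E + ∑ j ∈ Finset.range c,
        (if (f z w).length = j then ((2:ℝ) ^ (-(j:ℝ)) - E) else 0) := by
    intro w
    by_cases h : (f z w).length < c
    · rw [Finset.sum_ite_eq, if_pos (Finset.mem_range.2 h)]
      simp
    · push_neg at h
      have h2 : ∑ j ∈ Finset.range c,
          (if (f z w).length = j then ((2:ℝ) ^ (-(j:ℝ)) - E) else 0) = 0 := by
        apply Finset.sum_eq_zero
        intro j hj
        rw [if_neg]
        have := Finset.mem_range.1 hj
        omega
      rw [h2, add_zero, hE]
      apply Real.rpow_le_rpow_of_exponent_le one_le_two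
      have : (c : ℝ) ≤ ((f z w).length : ℝ) := by exact_mod_cast h
      linarith
  -- sum the pointwise bound
  have hcardfun : ((Fintype.card (Fin ℓ → X) : ℕ) : ℝ) = N := by
    rw [hN, Fintype.card_fun, Fintype.card_fin]
    push_cast
    ring
  have hsum : ∑ w : Fin ℓ → X, (2 : ℝ) ^ (-((f z w).length : ℝ)) ≤
      N * E + ∑ j ∈ Finset.range c,
        ((((Finset.univ : Finset (Fin ℓ → X)).filter
          (fun w => (f z w).length = j)).card : ℝ) * ((2:ℝ) ^ (-(j:ℝ)) - E)) := by
    calc ∑ w : Fin ℓ → X, (2 : ℝ) ^ (-((f z w).length : ℝ))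
        ≤ ∑ w : Fin ℓ → X, (E + ∑ j ∈ Finset.range c,
            (if (f z w).length = j then ((2:ℝ) ^ (-(j:ℝ)) - E) else 0)) :=
          Finset.sum_le_sum (fun w _ => hpt w)
      _ = N * E + ∑ w : Fin ℓ → X, ∑ j ∈ Finset.range c,
            (if (f z w).length = j then ((2:ℝ) ^ (-(j:ℝ)) - E) else 0) := by
          rw [Finset.sum_add_distrib, Finset.sum_const, Finset.card_univ,
            nsmul_eq_mul, hcardfun]
      _ = N * E + ∑ j ∈ Finset.range c, ∑ w : Fin ℓ → X,
            (if (f z w).length = j then ((2:ℝ) ^ (-(j:ℝ)) - E) else 0) := by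
          rw [Finset.sum_comm]
      _ = N * E + ∑ j ∈ Finset.range c,
            ((((Finset.univ : Finset (Fin ℓ → X)).filter
              (fun w => (f z w).length = j)).card : ℝ) * ((2:ℝ) ^ (-(j:ℝ)) - E)) := by
          congr 1
          apply Finset.sum_congr rfl
          intro j _
          rw [← Finset.sum_filter, Finset.sum_const, nsmul_eq_mul]
  -- bound the fiber sums
  have hstep : ∑ j ∈ Finset.range c,
        ((((Finset.univ : Finset (Fin ℓ → X)).filter
          (fun w => (f z w).length = j)).card : ℝ) * ((2:ℝ) ^ (-(j:ℝ)) - E))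
      ≤ ∑ j ∈ Finset.range c, (s * 2 ^ j * ((2:ℝ) ^ (-(j:ℝ)) - E)) := by
    apply Finset.sum_le_sum
    intro j hj
    have hjc : j ≤ c := (Finset.mem_range.1 hj).le
    have hnn : 0 ≤ (2:ℝ) ^ (-(j:ℝ)) - E := by
      rw [hE]
      have : (2:ℝ) ^ (-(c:ℝ)) ≤ (2:ℝ) ^ (-(j:ℝ)) := by
        apply Real.rpow_le_rpow_of_exponent_le one_le_two
        have : (j : ℝ) ≤ (c : ℝ) := by exact_mod_cast hjc
        linarith
      linarith
    exact mul_le_mul_of_nonneg_right (hcount j) hnn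
  -- compute the geometric sum
  have hgeom : ∑ j ∈ Finset.range c, (s * 2 ^ j * ((2:ℝ) ^ (-(j:ℝ)) - E))
      = c * s - s * E * ((2:ℝ) ^ c - 1) := by
    have hterm : ∀ j ∈ Finset.range c,
        s * 2 ^ j * ((2:ℝ) ^ (-(j:ℝ)) - E) = s - s * E * 2 ^ j := by
      intro j _
      have h1 : (2:ℝ) ^ j * (2:ℝ) ^ (-(j:ℝ)) = 1 := by
        rw [← Real.rpow_natCast 2 j, ← Real.rpow_add two_pos]
        simp
      nlinarith [h1]
    rw [Finset.sum_congr rfl hterm, Finset.sum_sub_distrib, Finset.sum_const,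
      Finset.card_range, ← Finset.mul_sum, geom_sum_eq (by norm_num : (2:ℝ) ≠ 1) c]
    ring
  -- final combination
  have hkey : (N + s) * E ≤ s := by
    have h1 : N + s ≤ s * (2:ℝ) ^ c := by
      have := mul_le_mul_of_nonneg_left hP hspos.le
      rw [mul_add, mul_one, mul_div_cancel₀ _ (ne_of_gt hspos)] at this
      linarith
    calc (N + s) * E ≤ s * (2:ℝ) ^ c * E := by
          exact mul_le_mul_of_nonneg_right h1 hEpos.le
      _ = s * (E * (2:ℝ) ^ c) := by ring
      _ = s := by rw [hEP, mul_one]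
  have hfinal : ∑ w : Fin ℓ → X, (2 : ℝ) ^ (-((f z w).length : ℝ)) ≤ c * s := by
    calc ∑ w : Fin ℓ → X, (2 : ℝ) ^ (-((f z w).length : ℝ))
        ≤ N * E + ∑ j ∈ Finset.range c, (s * 2 ^ j * ((2:ℝ) ^ (-(j:ℝ)) - E)) :=
          le_trans hsum (by linarith [hstep])
      _ = N * E + (c * s - s * E * ((2:ℝ) ^ c - 1)) := by rw [hgeom]
      _ = (N + s) * E + c * s - s * (E * (2:ℝ) ^ c) := by ring
      _ = (N + s) * E + c * s - s := by rw [hEP]; ring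
      _ ≤ c * s := by linarith
  calc ∑ w : Fin ℓ → X, (2 : ℝ) ^ (-((f z w).length : ℝ))
      ≤ c * s := hfinal
    _ ≤ (t + 1) * s := by
        exact mul_le_mul_of_nonneg_right hcle hspos.le
    _ = s * (1 + t) := by ring
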